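/- For integers $s, b, t$ with $t \ge 0$, the identity $\binom{s-b-2}{t+1}_v [b-t] + \binom{s-b-2}{t}_v [s-1-t] = [b+1]\binom{s-b-1}{t+1}_v$ holds in $\mathbb{Q}(v)$, where $[n] = (v^n - v^{-n})/(v-v^{-1})$ and $\binom{a}{t}_v$ denotes the balanced Gaussian binomial coefficient. -/

import Mathlib

open scoped BigOperators

/-- The balanced quantum integer `[n] = (v^n - v^{-n})/(v - v⁻¹)` in `ℚ(v)`. -/
noncomputable def qint (n : ℤ) : RatFunc ℚ :=
  (RatFunc.X ^ n - RatFunc.X ^ (-n)) / (RatFunc.X - RatFunc.X⁻¹)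

/-- The balanced Gaussian binomial coefficient
`\binom{a}{t}_v = ∏_{s=1}^t (v^{a-s+1} - v^{-a+s-1})/(v^s - v^{-s})`. -/
noncomputable def qbinom (a : ℤ) (t : ℕ) : RatFunc ℚ :=
  ∏ s ∈ Finset.range t,
    (RatFunc.X ^ (a - s) - RatFunc.X ^ (-(a - s))) /
      (RatFunc.X ^ ((s : ℤ) + 1) - RatFunc.X ^ (-((s : ℤ) + 1)))

/-- The identity
`\binom{s-b-2}{t+1}[b-t] + \binom{s-b-2}{t}[s-1-t] = [b+1]\binom{s-b-1}{t+1}`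
in `ℚ(v)`. -/
noncomputable def Laux (n : ℤ) : RatFunc ℚ := RatFunc.X ^ n - RatFunc.X ^ (-n)

lemma Xne : (RatFunc.X : RatFunc ℚ) ≠ 0 := RatFunc.X_ne_zero

lemma intDegree_X_pow (m : ℕ) : RatFunc.intDegree ((RatFunc.X : RatFunc ℚ) ^ m) = m := by
  induction m with
  | zero => simp
  | succ k ih =>
    rw [pow_succ, RatFunc.intDegree_mul (pow_ne_zero _ Xne) Xne, ih, RatFunc.intDegree_X]
    push_cast; ring

lemma Laux_ne_zero_pos {n : ℤ} (hn : 0 < n) : Laux n ≠ 0 := by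
  intro h
  have hx : (RatFunc.X : RatFunc ℚ) ^ n = RatFunc.X ^ (-n) := sub_eq_zero.mp h
  have h2 : (RatFunc.X : RatFunc ℚ) ^ (2 * n) = 1 := by
    have := congrArg (· * (RatFunc.X : RatFunc ℚ) ^ n) hx
    simp only [← zpow_add₀ Xne] at this
    simpa [two_mul] using this
  have hm : ((2 * n).toNat : ℤ) = 2 * n := Int.toNat_of_nonneg (by omega)
  rw [← hm, zpow_natCast] at h2
  have := congrArg RatFunc.intDegree h2
  rw [intDegree_X_pow, RatFunc.intDegree_one] at this
  omega

lemma Laux_neg (n : ℤ) : Laux (-n) = - Laux n := by simp [Laux]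

lemma Laux_ne_zero {n : ℤ} (hn : n ≠ 0) : Laux n ≠ 0 := by
  rcases lt_or_gt_of_ne hn with h | h
  · have := Laux_ne_zero_pos (n := -n) (by omega)
    rw [Laux_neg] at this; simpa using this
  · exact Laux_ne_zero_pos h

lemma key (s b : ℤ) (t : ℕ) :
    Laux (s - b - 2 - t) * Laux (b - t) + Laux ((t:ℤ) + 1) * Laux (s - 1 - t) =
      Laux (b + 1) * Laux (s - b - 1) := by
  simp only [Laux, sub_mul, mul_sub, ← zpow_add₀ Xne]
  ring_nf

noncomputable def Paux (a : ℤ) (t : ℕ) : RatFunc ℚ := ∏ j ∈ Finset.range t, Laux (a - j)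
noncomputable def Daux (t : ℕ) : RatFunc ℚ := ∏ j ∈ Finset.range t, Laux ((j : ℤ) + 1)

lemma qbinom_eq (a : ℤ) (t : ℕ) : qbinom a t = Paux a t / Daux t := by
  rw [qbinom, Paux, Daux, ← Finset.prod_div_distrib]
  rfl

lemma qint_eq (n : ℤ) : qint n = Laux n / Laux 1 := by
  rw [qint, Laux, Laux]
  norm_num [zpow_neg]

lemma Daux_ne_zero (t : ℕ) : Daux t ≠ 0 :=
  Finset.prod_ne_zero_iff.mpr fun j _ => Laux_ne_zero (by positivity)

lemma Paux_succ (a : ℤ) (t : ℕ) : Paux a (t + 1) = Paux a t * Laux (a - t) :=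
  Finset.prod_range_succ _ t

lemma Paux_succ' (a : ℤ) (t : ℕ) : Paux (a + 1) (t + 1) = Paux a t * Laux (a + 1) := by
  rw [Paux, Finset.prod_range_succ']
  congr 1
  · apply Finset.prod_congr rfl
    intro j _
    congr 1
    push_cast
    ring
  · norm_num

lemma Daux_succ (t : ℕ) : Daux (t + 1) = Daux t * Laux ((t : ℤ) + 1) :=
  Finset.prod_range_succ _ t

theorem qbinom_qint_identity (s b : ℤ) (t : ℕ) :
    qbinom (s - b - 2) (t + 1) * qint (b - t) + qbinom (s - b - 2) t * qint (s - 1 - t) =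
      qint (b + 1) * qbinom (s - b - 1) (t + 1) := by
  have hsb : s - b - 1 = (s - b - 2) + 1 := by ring
  rw [qbinom_eq, qbinom_eq, qbinom_eq, qint_eq, qint_eq, qint_eq, hsb, Paux_succ', Paux_succ,
    Daux_succ, ← hsb]
  have h1 : Laux (1 : ℤ) ≠ 0 := Laux_ne_zero one_ne_zero
  have ht : Laux ((t : ℤ) + 1) ≠ 0 := Laux_ne_zero (by positivity)
  have hD : Daux t ≠ 0 := Daux_ne_zero t
  field_simp
  linear_combination (Paux (s - b - 2) t) * key s b t
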